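/- arXiv:2303.15573 — 4 statements merged into one kernel-verified Lean document; each statement's English description precedes it below -/
import Mathlib

section
/- Let C be a finite set of pairs (π, π₀) ∈ ℝⁿ × ℝ, let Q = {x ∈ ℝⁿ : ⟪π, x⟫ ≤ π₀ for every (π, π₀) ∈ C}, and let x̂ ∈ Q. Let N be a natural number, let x : ℕ → ℝⁿ be a sequence, and let σ : ℕ → C be a choice of cuts such that for every index i < N: (i) x i ∉ Q; (ii) the cut σ i is violated at x i, i.e. ⟪(σ i).π, x i⟫ > (σ i).π₀; (iii) x (i+1) lies on the segment joining x i and x̂; and (iv) the cut σ i is tight at x (i+1), i.e. ⟪(σ i).π, x (i+1)⟫ = (σ i).π₀. Then N ≤ card C. Consequently, the iterative method for the Fenchel sub-problem terminates (reaches a point of Q) after at most card C secondary separations. -/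
/-- Finite termination of the iterative Fenchel sub-problem when all secondary cuts
come from a finite set `C` of cuts describing `Q`: the number of iterations `N` is at
most the cardinality of `C`. -/
theorem stmt_1 {n : ℕ} (C : Finset (EuclideanSpace ℝ (Fin n) × ℝ))
    (Q : Set (EuclideanSpace ℝ (Fin n)))
    (hQ : Q = {x | ∀ p ∈ C, (inner ℝ p.1 x : ℝ) ≤ p.2})
    (xh : EuclideanSpace ℝ (Fin n)) (hxh : xh ∈ Q)
    (N : ℕ) (x : ℕ → EuclideanSpace ℝ (Fin n))
    (σ : ℕ → EuclideanSpace ℝ (Fin n) × ℝ)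
    (hσC : ∀ i < N, σ i ∈ C)
    (hnotin : ∀ i < N, x i ∉ Q)
    (hviol : ∀ i < N, (inner ℝ (σ i).1 (x i) : ℝ) > (σ i).2)
    (hseg : ∀ i < N, x (i + 1) ∈ segment ℝ (x i) xh)
    (htight : ∀ i < N, (inner ℝ (σ i).1 (x (i + 1)) : ℝ) = (σ i).2) :
    N ≤ C.card := by
  subst hQ
  have hxhC : ∀ i < N, (inner ℝ (σ i).1 xh : ℝ) ≤ (σ i).2 := fun i hi => hxh _ (hσC i hi)
  have key : ∀ i, i < N → ∀ j, i < j → j ≤ N → (inner ℝ (σ i).1 (x j) : ℝ) ≤ (σ i).2 := by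
    intro i hiN j
    induction j with
    | zero => omega
    | succ k ih =>
      intro hij hjN
      rcases eq_or_lt_of_le (Nat.lt_succ_iff.mp hij) with he | hlt
      · subst he
        exact le_of_eq (htight i hiN)
      · have hk : (inner ℝ (σ i).1 (x k) : ℝ) ≤ (σ i).2 := ih hlt (by omega)
        obtain ⟨a, b, ha, hb, hab, hx⟩ := hseg k (by omega)
        rw [← hx]
        have : (inner ℝ (σ i).1 (a • x k + b • xh) : ℝ)
            = a * inner ℝ (σ i).1 (x k) + b * inner ℝ (σ i).1 xh := by
          rw [inner_add_right, real_inner_smul_right, real_inner_smul_right]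
        rw [this]
        have hxhi := hxhC i hiN
        have h1 : a * (inner ℝ (σ i).1 (x k) : ℝ) ≤ a * (σ i).2 := mul_le_mul_of_nonneg_left hk ha
        have h2 : b * (inner ℝ (σ i).1 xh : ℝ) ≤ b * (σ i).2 := mul_le_mul_of_nonneg_left hxhi hb
        have h3 : a * (σ i).2 + b * (σ i).2 = (σ i).2 := by rw [← add_mul, hab, one_mul]
        linarith
  have hinj : Set.InjOn σ (Finset.range N) := by
    intro i hi j hj hij
    simp only [Finset.coe_range, Set.mem_Iio] at hi hj
    by_contra hne
    rcases lt_or_gt_of_ne hne with h | h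
    · have := key i hi j h (le_of_lt hj)
      have hv := hviol j hj
      rw [← hij] at hv
      linarith
    · have := key j hj i h (le_of_lt hi)
      have hv := hviol i hi
      rw [hij] at hv
      linarith
  calc N = (Finset.range N).card := (Finset.card_range N).symm
    _ ≤ C.card := Finset.card_le_card_of_injOn σ (fun i hi => hσC i (Finset.mem_range.mp hi)) hinj
end

section
/- For every norm ν on ℝⁿ there exists ε > 0 such that for all λ, x̌, x*, y ∈ ℝⁿ the following holds: if ⟪λ, z⟫ ≤ ν(z) for every z ∈ ℝⁿ, ⟪λ, x̌ − x*⟫ = ν(x̌ − x*), x̌ ≠ x*, and ⟪λ, y⟫ = ⟪λ, x*⟫, then ‖y − x̌‖₂ ≥ ε · ‖x̌ − x*‖₂. -/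
lemma nu_sum_le {n : ℕ} (ν : EuclideanSpace ℝ (Fin n) → ℝ)
    (h0 : ν 0 = 0)
    (hadd : ∀ x y, ν (x + y) ≤ ν x + ν y)
    (s : Finset (Fin n)) (f : Fin n → EuclideanSpace ℝ (Fin n)) :
    ν (∑ i ∈ s, f i) ≤ ∑ i ∈ s, ν (f i) := by
  classical
  induction s using Finset.induction with
  | empty => simp [h0]
  | insert _ _ hx ih =>
    rename_i a s
    rw [Finset.sum_insert hx, Finset.sum_insert hx]
    exact le_trans (hadd _ _) (by linarith)

/-- Quantitative progress bound: for every norm `ν` on `ℝⁿ` there is `ε > 0` such that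
projecting the separated point onto the generated cut advances it by at least `ε` times
its `ℓ₂` distance to the nearest point. -/
theorem stmt_2 {n : ℕ} (ν : EuclideanSpace ℝ (Fin n) → ℝ)
    (hadd : ∀ x y, ν (x + y) ≤ ν x + ν y)
    (hsmul : ∀ (a : ℝ) (x : EuclideanSpace ℝ (Fin n)), ν (a • x) = |a| * ν x)
    (hdef : ∀ x, ν x = 0 → x = 0) :
    ∃ ε > (0 : ℝ), ∀ l xc xs y : EuclideanSpace ℝ (Fin n),
      (∀ z, (inner ℝ l z : ℝ) ≤ ν z) →
      (inner ℝ l (xc - xs) : ℝ) = ν (xc - xs) →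
      xc ≠ xs →
      (inner ℝ l y : ℝ) = (inner ℝ l xs : ℝ) →
      ‖y - xc‖ ≥ ε * ‖xc - xs‖ := by
  classical
  have h0 : ν 0 = 0 := by simpa using hsmul 0 0
  have hneg : ∀ x, ν (-x) = ν x := by
    intro x; simpa using hsmul (-1) x
  have hnonneg : ∀ x, 0 ≤ ν x := by
    intro x
    have h1 := hadd x (-x)
    rw [add_neg_cancel, h0, hneg] at h1
    linarith
  rcases Nat.eq_zero_or_pos n with hn | hn
  · subst hn
    refine ⟨1, one_pos, fun l xc xs y _ _ hne _ => absurd (Subsingleton.elim xc xs) hne⟩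
  haveI : Nonempty (Fin n) := ⟨⟨0, hn⟩⟩
  -- upper bound: ν x ≤ C * ‖x‖
  set C : ℝ := ∑ i, ν (EuclideanSpace.single i (1:ℝ)) with hC
  have hpos_e : ∀ i : Fin n, 0 < ν (EuclideanSpace.single i (1:ℝ)) := by
    intro i
    rcases (hnonneg _).lt_or_eq with h | h
    · exact h
    · exfalso
      have := hdef _ h.symm
      have h1 : (EuclideanSpace.single i (1:ℝ)) i = (0 : ℝ) := by rw [this]; rfl
      simp [EuclideanSpace.single_apply] at h1
  have hCpos : 0 < C := Finset.sum_pos (fun i _ => hpos_e i) Finset.univ_nonempty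
  have happ : ∀ (x : EuclideanSpace ℝ (Fin n)) (i : Fin n), |x i| ≤ ‖x‖ := by
    intro x i
    have h1 := abs_real_inner_le_norm (EuclideanSpace.single i (1:ℝ)) x
    rw [EuclideanSpace.inner_single_left] at h1
    simpa [EuclideanSpace.norm_single] using h1
  have hub : ∀ x, ν x ≤ C * ‖x‖ := by
    intro x
    have hx : x = ∑ i, x i • EuclideanSpace.single i (1:ℝ) := by
      ext j
      rw [WithLp.ofLp_sum, Finset.sum_apply]
      simp [EuclideanSpace.single_apply, mul_comm]
    calc ν x = ν (∑ i, x i • EuclideanSpace.single i (1:ℝ)) := by rw [← hx]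
      _ ≤ ∑ i, ν (x i • EuclideanSpace.single i (1:ℝ)) := nu_sum_le ν h0 hadd _ _
      _ = ∑ i, |x i| * ν (EuclideanSpace.single i (1:ℝ)) := by simp [hsmul]
      _ ≤ ∑ i, ‖x‖ * ν (EuclideanSpace.single i (1:ℝ)) := by
          apply Finset.sum_le_sum
          intro i _
          exact mul_le_mul_of_nonneg_right (happ x i) (hnonneg _)
      _ = C * ‖x‖ := by rw [← Finset.mul_sum, mul_comm]
  -- ν is Lipschitz hence continuous
  have hlip : ∀ x y : EuclideanSpace ℝ (Fin n), |ν x - ν y| ≤ C * ‖x - y‖ := by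
    intro x y
    have h1 : ν x ≤ ν y + ν (x - y) := by
      have := hadd y (x - y); simpa using this
    have h2 : ν y ≤ ν x + ν (x - y) := by
      have := hadd x (y - x)
      have hxy : ν (y - x) = ν (x - y) := by rw [← hneg (x - y), neg_sub]
      simp [hxy] at this; linarith
    have := hub (x - y)
    rw [abs_sub_le_iff]
    constructor <;> linarith
  have hcont : Continuous ν := by
    apply Metric.continuous_iff.mpr
    intro x ε hε
    refine ⟨ε / (C + 1), by positivity, fun y hy => ?_⟩
    have h1 := hlip y x
    rw [Real.dist_eq]
    have h2 : ‖y - x‖ = dist y x := by rw [dist_eq_norm]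
    calc |ν y - ν x| ≤ C * ‖y - x‖ := h1
      _ < (C + 1) * (ε / (C + 1)) := by
          rw [h2]
          have : C * dist y x ≤ (C + 1) * dist y x :=
            mul_le_mul_of_nonneg_right (by linarith) dist_nonneg
          calc C * dist y x ≤ (C + 1) * dist y x := this
            _ < (C + 1) * (ε / (C + 1)) := by
                exact mul_lt_mul_of_pos_left hy (by positivity)
      _ = ε := by field_simp
  -- lower bound via compactness
  have hsph : (Metric.sphere (0 : EuclideanSpace ℝ (Fin n)) 1).Nonempty := by
    apply NormedSpace.sphere_nonempty.mpr
    norm_num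
  obtain ⟨x0, hx0mem, hx0min⟩ :=
    (isCompact_sphere (0 : EuclideanSpace ℝ (Fin n)) 1).exists_isMinOn hsph hcont.continuousOn
  set m : ℝ := ν x0 with hm
  have hx0ne : x0 ≠ 0 := by
    intro h
    have := mem_sphere_zero_iff_norm.mp hx0mem
    rw [h] at this; simp at this
  have hmpos : 0 < m := by
    rcases (hnonneg x0).lt_or_eq with h | h
    · exact h
    · exact absurd (hdef _ h.symm) hx0ne
  have hlb : ∀ x, m * ‖x‖ ≤ ν x := by
    intro x
    rcases eq_or_ne x 0 with h | h
    · simp [h, h0]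
    · have hxn : ‖x‖ ≠ 0 := norm_ne_zero_iff.mpr h
      have hu : (‖x‖⁻¹ • x) ∈ Metric.sphere (0 : EuclideanSpace ℝ (Fin n)) 1 := by
        rw [mem_sphere_zero_iff_norm, norm_smul, norm_inv, norm_norm]
        field_simp
      have h1 := hx0min hu
      have h2 : ν (‖x‖⁻¹ • x) = ‖x‖⁻¹ * ν x := by
        rw [hsmul]; congr 1
        rw [abs_inv, abs_norm]
      have h1' : m ≤ ‖x‖⁻¹ * ν x := h2 ▸ h1
      have hxpos : 0 < ‖x‖ := lt_of_le_of_ne (norm_nonneg x) (Ne.symm hxn)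
      calc m * ‖x‖ ≤ (‖x‖⁻¹ * ν x) * ‖x‖ := mul_le_mul_of_nonneg_right h1' (norm_nonneg x)
        _ = ν x := by field_simp
  -- main argument
  refine ⟨m / C, div_pos hmpos hCpos, fun l xc xs y hl hteq hne hy => ?_⟩
  -- ‖l‖ ≤ C
  have hlC : ‖l‖ ≤ C := by
    have h1 : ‖l‖ ^ 2 ≤ C * ‖l‖ := by
      have := hl l
      rw [real_inner_self_eq_norm_sq] at this
      exact this.trans (hub l)
    rcases eq_or_ne l 0 with h | h
    · simp [h]; linarith
    · have hlp : 0 < ‖l‖ := norm_pos_iff.mpr h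
      nlinarith
  have hdpos : 0 < ν (xc - xs) := by
    rcases (hnonneg (xc - xs)).lt_or_eq with h | h
    · exact h
    · exact absurd (sub_eq_zero.mp (hdef _ h.symm)) hne
  have hinner : (inner ℝ l (xc - y) : ℝ) = ν (xc - xs) := by
    rw [inner_sub_right, hy, ← inner_sub_right]
    exact hteq
  have hcs : ν (xc - xs) ≤ ‖l‖ * ‖xc - y‖ := by
    rw [← hinner]
    exact (real_inner_le_norm l (xc - y))
  have hnorm : ‖xc - y‖ = ‖y - xc‖ := by rw [← norm_neg, neg_sub]
  have h5 : m * ‖xc - xs‖ ≤ ν (xc - xs) := hlb _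
  have h6 : ‖l‖ * ‖xc - y‖ ≤ C * ‖y - xc‖ := by
    rw [hnorm]
    exact mul_le_mul_of_nonneg_right hlC (norm_nonneg _)
  have h7 : m * ‖xc - xs‖ ≤ C * ‖y - xc‖ := by linarith
  rw [ge_iff_le, div_mul_eq_mul_div, div_le_iff₀ hCpos]
  linarith [mul_comm (‖y - xc‖) C]
end

section
/- Let K be a finite set, D : K → ℝ, π : K → ℝ, c ∈ ℝ, and π_o ∈ ℝ with π_o ≥ 0. Consider the value V = sup{ ∑_{k ∈ S} π k − π_o · o : S ⊆ K, o ∈ ℝ, o ≥ 0, ∑_{k ∈ S} D k ≤ c + o }. Then (a) V = max over subsets S ⊆ K of ( ∑_{k ∈ S} π k − π_o · max(0, ∑_{k ∈ S} D k − c) ), and this maximum is attained; and (b) if moreover D k ≥ 0 for all k, c ≥ 0, and ∑_{k ∈ K} D k ≥ c, then V equals the maximum of the two knapsack values V₁ = max{ ∑_{k ∈ S} π k : S ⊆ K, ∑_{k ∈ S} D k ≤ c } and V₂ = max{ ∑_{k ∈ S} π k − π_o·(∑_{k ∈ S} D k − c) : S ⊆ K, ∑_{k ∈ S} D k ≥ c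 }. -/
/-- The knapsack oracle `(O_a)`: with `π_o ≥ 0`, (a) the supremum over `(S, o)` is
attained at `o = max 0 (∑_{k∈S} D k − c)` for some best subset `S₀`; (b) under the
additional assumptions, it equals the maximum of the two knapsack values. -/
theorem stmt_14 {K : Type*} [Fintype K] (D : K → ℝ) (π : K → ℝ) (c : ℝ)
    (πo : ℝ) (hπo : 0 ≤ πo) :
    (∃ S₀ : Finset K,
      (∀ S : Finset K,
        (∑ k ∈ S, π k) - πo * max 0 ((∑ k ∈ S, D k) - c)
          ≤ (∑ k ∈ S₀, π k) - πo * max 0 ((∑ k ∈ S₀, D k) - c)) ∧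
      sSup {v : ℝ | ∃ S : Finset K, ∃ o : ℝ, 0 ≤ o ∧ (∑ k ∈ S, D k) ≤ c + o ∧
          v = (∑ k ∈ S, π k) - πo * o}
        = (∑ k ∈ S₀, π k) - πo * max 0 ((∑ k ∈ S₀, D k) - c))
    ∧ ((∀ k, 0 ≤ D k) → 0 ≤ c → c ≤ ∑ k, D k →
      sSup {v : ℝ | ∃ S : Finset K, ∃ o : ℝ, 0 ≤ o ∧ (∑ k ∈ S, D k) ≤ c + o ∧
          v = (∑ k ∈ S, π k) - πo * o}
        = max
          (sSup {v : ℝ | ∃ S : Finset K, (∑ k ∈ S, D k) ≤ c ∧ v = ∑ k ∈ S, π k})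
          (sSup {v : ℝ | ∃ S : Finset K, c ≤ ∑ k ∈ S, D k ∧
              v = (∑ k ∈ S, π k) - πo * ((∑ k ∈ S, D k) - c)})) := by
  classical
  set f : Finset K → ℝ := fun S => (∑ k ∈ S, π k) - πo * max 0 ((∑ k ∈ S, D k) - c)
    with hf
  obtain ⟨S₀, -, hS₀⟩ := Finset.exists_max_image (Finset.univ : Finset (Finset K)) f
    ⟨∅, Finset.mem_univ _⟩
  have hmax : ∀ S : Finset K, f S ≤ f S₀ := fun S => hS₀ S (Finset.mem_univ _)
  set A : Set ℝ := {v : ℝ | ∃ S : Finset K, ∃ o : ℝ, 0 ≤ o ∧ (∑ k ∈ S, D k) ≤ c + o ∧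
      v = (∑ k ∈ S, π k) - πo * o} with hA
  -- every element of A is ≤ f S₀
  have hub : ∀ v ∈ A, v ≤ f S₀ := by
    rintro v ⟨S, o, ho, hco, rfl⟩
    have h1 : max 0 ((∑ k ∈ S, D k) - c) ≤ o := by
      apply max_le ho
      linarith
    have : πo * max 0 ((∑ k ∈ S, D k) - c) ≤ πo * o := by
      exact mul_le_mul_of_nonneg_left h1 hπo
    calc (∑ k ∈ S, π k) - πo * o ≤ f S := by simp only [hf]; linarith
      _ ≤ f S₀ := hmax S
  have hmemA : ∀ S : Finset K, f S ∈ A := by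
    intro S
    refine ⟨S, max 0 ((∑ k ∈ S, D k) - c), le_max_left _ _, ?_, rfl⟩
    have := le_max_right 0 ((∑ k ∈ S, D k) - c)
    linarith
  have hsupA : sSup A = f S₀ :=
    le_antisymm (csSup_le ⟨f S₀, hmemA S₀⟩ hub) (le_csSup ⟨f S₀, hub⟩ (hmemA S₀))
  refine ⟨⟨S₀, hmax, hsupA⟩, ?_⟩
  intro hD hc hcD
  set B₁ : Set ℝ := {v : ℝ | ∃ S : Finset K, (∑ k ∈ S, D k) ≤ c ∧ v = ∑ k ∈ S, π k}
    with hB₁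
  set B₂ : Set ℝ := {v : ℝ | ∃ S : Finset K, c ≤ ∑ k ∈ S, D k ∧
      v = (∑ k ∈ S, π k) - πo * ((∑ k ∈ S, D k) - c)} with hB₂
  have hub₁ : ∀ v ∈ B₁, v ≤ f S₀ := by
    rintro v ⟨S, hle, rfl⟩
    have h0 : max 0 ((∑ k ∈ S, D k) - c) = 0 := max_eq_left (by linarith)
    have := hmax S
    rw [hf] at this
    simpa [h0] using this
  have hub₂ : ∀ v ∈ B₂, v ≤ f S₀ := by
    rintro v ⟨S, hge, rfl⟩
    have h0 : max 0 ((∑ k ∈ S, D k) - c) = (∑ k ∈ S, D k) - c :=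
      max_eq_right (by linarith)
    have := hmax S
    simp only [hf] at this
    rw [h0] at this
    exact this
  have hne₁ : (0 : ℝ) ∈ B₁ := ⟨∅, by simpa using hc, by simp⟩
  have hne₂ : ((∑ k, π k) - πo * ((∑ k, D k) - c)) ∈ B₂ := ⟨Finset.univ, hcD, rfl⟩
  rw [hsupA]
  apply le_antisymm
  · rcases le_total (∑ k ∈ S₀, D k) c with h | h
    · refine le_max_of_le_left ?_
      have h0 : max 0 ((∑ k ∈ S₀, D k) - c) = 0 := max_eq_left (by linarith)
      have : f S₀ ∈ B₁ := ⟨S₀, h, by rw [hf]; simp [h0]⟩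
      exact le_csSup ⟨f S₀, hub₁⟩ this
    · refine le_max_of_le_right ?_
      have h0 : max 0 ((∑ k ∈ S₀, D k) - c) = (∑ k ∈ S₀, D k) - c :=
        max_eq_right (by linarith)
      have : f S₀ ∈ B₂ := ⟨S₀, h, by simp only [hf]; rw [h0]⟩
      exact le_csSup ⟨f S₀, hub₂⟩ this
  · exact max_le (csSup_le ⟨0, hne₁⟩ hub₁) (csSup_le ⟨_, hne₂⟩ hub₂)
end

section
/- Let n ≥ 1 and let S ⊆ ℝⁿ be a set such that every s ∈ S has first coordinate s₁ ∈ {0, 1}. Let π ∈ ℝⁿ and π₀, γ₀ ∈ ℝ satisfy: ⟪π, s⟫ ≤ π₀ for every s ∈ S with s₁ = 1, and ⟪π, s⟫ ≤ γ₀ for every s ∈ S with s₁ = 0. Define γ = π + (γ₀ − π₀) • e₁, where e₁ is the first standard basis vector. Then ⟪γ, x⟫ ≤ γ₀ for every x in the convex hull of S. -/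
/-- Correctness of the sequential lifting step: a cut valid on the points of `S` with
first coordinate `1`, together with the lifting value `γ₀` bounding the points with
first coordinate `0`, yields a cut `⟪γ, x⟫ ≤ γ₀` valid on the convex hull of `S`,
where `γ = π + (γ₀ − π₀) • e₁`. -/
theorem stmt_16 {n : ℕ} (hn : 1 ≤ n) (S : Set (EuclideanSpace ℝ (Fin n)))
    (hS : ∀ s ∈ S, s ⟨0, hn⟩ = 0 ∨ s ⟨0, hn⟩ = 1)
    (π : EuclideanSpace ℝ (Fin n)) (π₀ γ₀ : ℝ)
    (h1 : ∀ s ∈ S, s ⟨0, hn⟩ = 1 → (inner ℝ π s : ℝ) ≤ π₀)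
    (h0 : ∀ s ∈ S, s ⟨0, hn⟩ = 0 → (inner ℝ π s : ℝ) ≤ γ₀)
    (γ : EuclideanSpace ℝ (Fin n))
    (hγ : γ = π + (γ₀ - π₀) • EuclideanSpace.single ⟨0, hn⟩ (1 : ℝ)) :
    ∀ x ∈ convexHull ℝ S, (inner ℝ γ x : ℝ) ≤ γ₀ := by
  intro x hx
  have hconv : Convex ℝ {y : EuclideanSpace ℝ (Fin n) | (inner ℝ γ y : ℝ) ≤ γ₀} := by
    apply convex_halfSpace_le
    exact ⟨fun a b => inner_add_right γ a b, fun c a => real_inner_smul_right γ a c⟩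
  have hsub : S ⊆ {y : EuclideanSpace ℝ (Fin n) | (inner ℝ γ y : ℝ) ≤ γ₀} := by
    intro s hs
    have hcomp : (inner ℝ γ s : ℝ) = (inner ℝ π s : ℝ) + (γ₀ - π₀) * s ⟨0, hn⟩ := by
      rw [hγ, inner_add_left, real_inner_smul_left, EuclideanSpace.inner_single_left]
      simp
    rcases hS s hs with h | h
    · simp only [Set.mem_setOf_eq, hcomp, h, mul_zero, add_zero]
      exact h0 s hs h
    · simp only [Set.mem_setOf_eq, hcomp, h, mul_one]
      linarith [h1 s hs h]
  exact convexHull_min hsub hconv hx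
end
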